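/- arXiv:1403.1975 — 2 statements merged into one kernel-verified Lean document; each statement's English description precedes it below -/
import Mathlib

section
/- Let p ≤ q, let A ∈ ℝ^{q×p} have rank p, and let Γ, Ω ∈ ℝ^{q×q} be symmetric positive definite matrices. Then the matrices AᵀΩA and AᵀΓ⁻¹A are invertible, and the difference (AᵀΩA)⁻¹ AᵀΩΓΩA (AᵀΩA)⁻¹ − (AᵀΓ⁻¹A)⁻¹ is positive semi-definite; equivalently, among all symmetric positive definite weight matrices Ω the asymptotic covariance matrix M = (AᵀΩA)⁻¹ AᵀΩΓΩA (AᵀΩA)⁻¹ is minimized, with respect to the positive semi-definite ordering, by the choice Ω = Γ⁻¹, for which M equals (AᵀΓ⁻¹A)⁻¹. -/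
open Matrix

lemma mulVec_inj_of_rank {p q : ℕ} (A : Matrix (Fin q) (Fin p) ℝ) (hA : A.rank = p) :
    ∀ x : Fin p → ℝ, A.mulVec x = 0 → x = 0 := by
  intro x hx
  have h1 := A.mulVecLin.finrank_range_add_finrank_ker
  rw [Matrix.rank] at hA
  simp [hA, Module.finrank_fin_fun] at h1
  exact LinearMap.ker_eq_bot.mp h1 (by simpa using hx)

lemma posDef_conj {p q : ℕ} (A : Matrix (Fin q) (Fin p) ℝ)
    (hA : ∀ x : Fin p → ℝ, A.mulVec x = 0 → x = 0)
    {W : Matrix (Fin q) (Fin q) ℝ} (hW : W.PosDef) : (Aᵀ * W * A).PosDef := by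
  refine Matrix.PosDef.of_dotProduct_mulVec_pos ?_ ?_
  · have := hW.isHermitian
    rw [Matrix.IsHermitian, conjTranspose_eq_transpose_of_trivial] at this ⊢
    rw [transpose_mul, transpose_mul, transpose_transpose, this, Matrix.mul_assoc]
  · intro x hx
    have hAx : A.mulVec x ≠ 0 := fun h => hx (hA x h)
    have := hW.dotProduct_mulVec_pos hAx
    simpa [Matrix.mul_assoc, ← Matrix.mulVec_mulVec, Matrix.dotProduct_mulVec,
      Matrix.vecMul_transpose] using this

/-- optimality of the weight matrix `Ω = Γ⁻¹` (Corollary 3.3 of the paper).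
For `A ∈ ℝ^{q×p}` of full column rank `p ≤ q` and symmetric positive definite `Γ, Ω`,
the matrices `AᵀΩA` and `AᵀΓ⁻¹A` are invertible and
`(AᵀΩA)⁻¹ AᵀΩΓΩA (AᵀΩA)⁻¹ − (AᵀΓ⁻¹A)⁻¹` is positive semi-definite. -/
theorem stmt_3 (p q : ℕ) (hpq : p ≤ q) (A : Matrix (Fin q) (Fin p) ℝ)
    (hA : A.rank = p) (Γ Ω : Matrix (Fin q) (Fin q) ℝ)
    (hΓ : Γ.PosDef) (hΩ : Ω.PosDef) :
    IsUnit (Aᵀ * Ω * A) ∧ IsUnit (Aᵀ * Γ⁻¹ * A) ∧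
      ((Aᵀ * Ω * A)⁻¹ * (Aᵀ * Ω * Γ * Ω * A) * (Aᵀ * Ω * A)⁻¹
        - (Aᵀ * Γ⁻¹ * A)⁻¹).PosSemidef := by
  have hinj := mulVec_inj_of_rank A hA
  have hS : (Aᵀ * Ω * A).PosDef := posDef_conj A hinj hΩ
  have hΓi : Γ⁻¹.PosDef := hΓ.inv
  have hT : (Aᵀ * Γ⁻¹ * A).PosDef := posDef_conj A hinj hΓi
  refine ⟨hS.isUnit, hT.isUnit, ?_⟩
  set S := Aᵀ * Ω * A with hSdef
  set T := Aᵀ * Γ⁻¹ * A with hTdef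
  have hSdet : IsUnit S.det := (Matrix.isUnit_iff_isUnit_det S).mp hS.isUnit
  have hTdet : IsUnit T.det := (Matrix.isUnit_iff_isUnit_det T).mp hT.isUnit
  -- square root of Γ
  open scoped MatrixOrder in
  set R := CFC.sqrt Γ with hRdef
  open scoped MatrixOrder in
  have hRR : R * R = Γ := CFC.sqrt_mul_sqrt_self Γ hΓ.posSemidef.nonneg
  have hRsym : Rᵀ = R := by
    open scoped MatrixOrder in
    have := (CFC.sqrt_nonneg Γ).posSemidef.isHermitian
    rwa [Matrix.IsHermitian, conjTranspose_eq_transpose_of_trivial] at this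
  have hRdet : IsUnit R.det := by
    have h : R.det * R.det = Γ.det := by rw [← det_mul, hRR]
    have : Γ.det ≠ 0 := ne_of_gt hΓ.det_pos
    refine isUnit_iff_ne_zero.mpr fun h0 => this ?_
    rw [← h, h0, mul_zero]
  have hR2 : R * R⁻¹ = 1 := mul_nonsing_inv R hRdet
  have hR1 : R⁻¹ * R = 1 := nonsing_inv_mul R hRdet
  have hRinv : (R⁻¹)ᵀ = R⁻¹ := by rw [transpose_nonsing_inv, hRsym]
  have hΩsym : Ωᵀ = Ω := by
    have := hΩ.isHermitian
    rwa [Matrix.IsHermitian, conjTranspose_eq_transpose_of_trivial] at this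
  have hΓinv : Γ⁻¹ = R⁻¹ * R⁻¹ := by rw [← hRR, Matrix.mul_inv_rev]
  set B := R * Ω * A with hBdef
  set C := R⁻¹ * A with hCdef
  have hCt : Cᵀ = Aᵀ * R⁻¹ := by rw [hCdef, transpose_mul, hRinv]
  have hBt : Bᵀ = Aᵀ * Ω * R := by
    rw [hBdef, transpose_mul, transpose_mul, hRsym, hΩsym, Matrix.mul_assoc]
  have hCtC : Cᵀ * C = T := by
    rw [hCt, hCdef, hTdef, hΓinv, Matrix.mul_assoc, Matrix.mul_assoc,
      ← Matrix.mul_assoc R⁻¹ R⁻¹ A]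
  have hBtC : Bᵀ * C = S := by
    rw [hBt, hCdef, hSdef, Matrix.mul_assoc (Aᵀ * Ω) R, ← Matrix.mul_assoc R R⁻¹ A,
      hR2, Matrix.one_mul]
  have hCtB : Cᵀ * B = S := by
    rw [hCt, hBdef, hSdef]
    simp only [Matrix.mul_assoc]
    rw [← Matrix.mul_assoc R⁻¹ R (Ω * A), hR1, Matrix.one_mul]
  have hBtB : Bᵀ * B = Aᵀ * Ω * Γ * Ω * A := by
    rw [hBt, hBdef, ← hRR]
    simp only [Matrix.mul_assoc]
  have hSsym : Sᵀ = S := by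
    have := hS.isHermitian
    rwa [Matrix.IsHermitian, conjTranspose_eq_transpose_of_trivial] at this
  have hTsym : Tᵀ = T := by
    have := hT.isHermitian
    rwa [Matrix.IsHermitian, conjTranspose_eq_transpose_of_trivial] at this
  have hSinv : (S⁻¹)ᵀ = S⁻¹ := by rw [transpose_nonsing_inv, hSsym]
  have hTinv : (T⁻¹)ᵀ = T⁻¹ := by rw [transpose_nonsing_inv, hTsym]
  have hS1 : S⁻¹ * S = 1 := nonsing_inv_mul S hSdet
  have hS2 : S * S⁻¹ = 1 := mul_nonsing_inv S hSdet
  have hT1 : T⁻¹ * T = 1 := nonsing_inv_mul T hTdet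
  set D := B * S⁻¹ with hDdef
  have hDt : Dᵀ = S⁻¹ * Bᵀ := by rw [hDdef, transpose_mul, hSinv]
  set P := (1 : Matrix (Fin q) (Fin q) ℝ) - C * T⁻¹ * Cᵀ with hPdef
  have hT2 : T * T⁻¹ = 1 := mul_nonsing_inv T hTdet
  have hX : (C * T⁻¹ * Cᵀ)ᵀ = C * T⁻¹ * Cᵀ := by
    rw [transpose_mul (C * T⁻¹) Cᵀ, transpose_mul C T⁻¹, transpose_transpose, hTinv,
      ← Matrix.mul_assoc]
  have hPsym : Pᵀ = P := by
    rw [hPdef, transpose_sub, transpose_one, hX]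
  have hXX : (C * T⁻¹ * Cᵀ) * (C * T⁻¹ * Cᵀ) = C * T⁻¹ * Cᵀ := by
    calc (C * T⁻¹ * Cᵀ) * (C * T⁻¹ * Cᵀ)
        = C * (T⁻¹ * (Cᵀ * (C * (T⁻¹ * Cᵀ)))) := by simp only [Matrix.mul_assoc]
      _ = C * (T⁻¹ * (T * (T⁻¹ * Cᵀ))) := by
          rw [← Matrix.mul_assoc Cᵀ C (T⁻¹ * Cᵀ), hCtC]
      _ = C * T⁻¹ * Cᵀ := by
          rw [← Matrix.mul_assoc T T⁻¹ Cᵀ, hT2, Matrix.one_mul]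
          simp only [Matrix.mul_assoc]
  have hPP : P * P = P := by
    rw [hPdef, Matrix.sub_mul, Matrix.one_mul, Matrix.mul_sub, Matrix.mul_one, hXX]
    abel
  have hP : P.PosSemidef := by
    have h := posSemidef_conjTranspose_mul_self P
    rwa [conjTranspose_eq_transpose_of_trivial, hPsym, hPP] at h
  have e1 : Dᵀ * C = 1 := by rw [hDt, Matrix.mul_assoc, hBtC, hS1]
  have e2 : Cᵀ * D = 1 := by rw [hDdef, ← Matrix.mul_assoc, hCtB, hS2]
  have e3 : Dᵀ * D = S⁻¹ * (Aᵀ * Ω * Γ * Ω * A) * S⁻¹ := by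
    rw [hDt, hDdef, Matrix.mul_assoc, ← Matrix.mul_assoc Bᵀ B S⁻¹, hBtB]
    simp only [Matrix.mul_assoc]
  have e4 : Dᵀ * (C * T⁻¹ * Cᵀ) * D = T⁻¹ := by
    calc Dᵀ * (C * T⁻¹ * Cᵀ) * D = (Dᵀ * C) * T⁻¹ * (Cᵀ * D) := by
          simp only [Matrix.mul_assoc]
      _ = T⁻¹ := by rw [e1, e2, Matrix.one_mul, Matrix.mul_one]
  have key : S⁻¹ * (Aᵀ * Ω * Γ * Ω * A) * S⁻¹ - T⁻¹ = Dᵀ * P * D := by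
    rw [hPdef, Matrix.mul_sub, Matrix.sub_mul, Matrix.mul_one, e3, e4]
  rw [key]
  have h := hP.conjTranspose_mul_mul_same D
  rwa [conjTranspose_eq_transpose_of_trivial] at h
end

section
/- Under the stated assumptions, sup_{x ∈ [0,1]^d} |ℓ̂_{n,k}(x) − ℓ(x;θ₀)| converges to 0 in probability as n → ∞; that is, for every ε > 0, P[sup_{x ∈ [0,1]^d} |ℓ̂_{n,k}(x) − ℓ(x;θ₀)| > ε] → 0. -/
set_option maxHeartbeats 2000000
set_option linter.unusedSectionVars false
set_option linter.unusedVariables false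
open MeasureTheory ProbabilityTheory Filter Topology Finset
open scoped ENNReal

section CDF
variable {μ : Measure ℝ} [IsProbabilityMeasure μ] {F : ℝ → ℝ}
  (hF : ∀ t, F t = (μ (Set.Iic t)).toReal) (hc : Continuous F)

include hF in
lemma cdf_mono : Monotone F := by
  intro a b hab
  rw [hF a, hF b]
  exact ENNReal.toReal_mono (measure_ne_top _ _) (measure_mono (Set.Iic_subset_Iic.2 hab))

include hF in
lemma cdf_le_one : ∀ t, F t ≤ 1 := by
  intro t
  rw [hF t]
  exact ENNReal.toReal_le_of_le_ofReal one_pos.le (by simpa using prob_le_one (μ := μ))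

include hF hc in
lemma cdf_atom (a : ℝ) : μ {a} = 0 := by
  have h1 : ∀ b < a, μ {a} ≤ ENNReal.ofReal (F a - F b) := by
    intro b hb
    have hsub : {a} ⊆ Set.Ioc b a := by
      intro y hy; simp only [Set.mem_singleton_iff] at hy; subst hy
      exact ⟨hb, le_refl _⟩
    refine (measure_mono hsub).trans ?_
    have : μ (Set.Ioc b a) = μ (Set.Iic a) - μ (Set.Iic b) := by
      rw [show Set.Ioc b a = Set.Iic a \ Set.Iic b by ext y; simp [and_comm], measure_diff (Set.Iic_subset_Iic.2 hb.le)
        measurableSet_Iic.nullMeasurableSet (measure_ne_top _ _)]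
    rw [this, hF a, hF b, ENNReal.ofReal_sub _ ENNReal.toReal_nonneg,
      ENNReal.ofReal_toReal (measure_ne_top _ _), ENNReal.ofReal_toReal (measure_ne_top _ _)]
  have h2 : Tendsto (fun b => ENNReal.ofReal (F a - F b)) (nhdsWithin a (Set.Iio a))
      (nhds (ENNReal.ofReal (F a - F a))) := by
    exact (ENNReal.continuous_ofReal.tendsto _).comp
      ((continuous_const.sub hc).continuousWithinAt)
  rw [sub_self, ENNReal.ofReal_zero] at h2
  exact le_antisymm (ge_of_tendsto h2 (eventually_nhdsWithin_of_forall fun b hb => h1 b hb))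
    (zero_le)

include hF hc in
lemma cdf_quantile {s : ℝ} (hs0 : 0 < s) (hs1 : s < 1) :
    ∃ q, μ (Set.Ioi q) = ENNReal.ofReal s ∧ F q = 1 - s ∧
      {v | 1 - s ≤ F v} ⊆ Set.Ici q ∧ Set.Ioi q ⊆ {v | 1 - s ≤ F v} := by
  -- existence of b with F b > 1 - s
  have hFtop : Tendsto F atTop (nhds 1) := by
    have := tendsto_measure_Iic_atTop μ
    rw [measure_univ] at this
    have h2 : Tendsto (fun x => (μ (Set.Iic x)).toReal) atTop (nhds (ENNReal.toReal 1)) :=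
      (ENNReal.tendsto_toReal ENNReal.one_ne_top).comp this
    simp only [ENNReal.toReal_one] at h2
    exact h2.congr fun x => (hF x).symm
  obtain ⟨b, hb⟩ := (hFtop.eventually (eventually_gt_nhds (by linarith : 1 - s < 1))).exists
  -- existence of a with F a < 1 - s, and lower boundedness
  have hbdd : ∃ c, ∀ v, 1 - s ≤ F v → c ≤ v := by
    have h1 : Tendsto (fun x : ℝ => (μ (Set.Ici x)).toReal) atBot (nhds 1) := by
      have := tendsto_measure_Ici_atBot μ
      rw [measure_univ] at this
      have h2 : Tendsto (fun x : ℝ => (μ (Set.Ici x)).toReal) atBot (nhds (ENNReal.toReal 1)) :=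
        (ENNReal.tendsto_toReal ENNReal.one_ne_top).comp this
      simpa using h2
    obtain ⟨c, hc'⟩ := (h1.eventually (eventually_gt_nhds hs1)).exists
    refine ⟨c - 1, fun v hv => ?_⟩
    by_contra hlt
    push_neg at hlt
    have hdisj : Disjoint (Set.Iic v) (Set.Ici c) := by
      rw [Set.disjoint_iff]
      intro y ⟨hy1, hy2⟩
      exact absurd ((Set.mem_Ici.1 hy2).trans (Set.mem_Iic.1 hy1)) (by linarith)
    have : μ (Set.Iic v) + μ (Set.Ici c) ≤ 1 := by
      rw [← measure_union hdisj measurableSet_Ici]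
      simpa using prob_le_one (μ := μ)
    have hv' : (μ (Set.Iic v)).toReal + (μ (Set.Ici c)).toReal ≤ 1 := by
      rw [← ENNReal.toReal_add (measure_ne_top _ _) (measure_ne_top _ _)]
      exact ENNReal.toReal_le_of_le_ofReal one_pos.le (by simpa using this)
    rw [← hF v] at hv'
    linarith
  obtain ⟨c, hcbd⟩ := hbdd
  set A := {v | 1 - s ≤ F v} with hA
  have hAne : A.Nonempty := ⟨b, le_of_lt hb⟩
  have hAbdd : BddBelow A := ⟨c, fun v hv => hcbd v hv⟩
  have hAclosed : IsClosed A := isClosed_le continuous_const hc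
  set q := sInf A with hq
  have hqA : q ∈ A := hAclosed.csInf_mem hAne hAbdd
  have hsub1 : A ⊆ Set.Ici q := fun v hv => csInf_le hAbdd hv
  have hsub2 : Set.Ioi q ⊆ A := by
    intro v hv
    obtain ⟨a, haA, hav⟩ := (csInf_lt_iff hAbdd hAne).1 hv
    exact le_trans haA (cdf_mono hF hav.le)
  have hFq : F q = 1 - s := by
    refine le_antisymm ?_ hqA
    have hlim : Tendsto F (nhdsWithin q (Set.Iio q)) (nhds (F q)) :=
      (hc.tendsto q).mono_left nhdsWithin_le_nhds
    refine le_of_tendsto hlim (eventually_nhdsWithin_of_forall fun v hv => ?_)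
    by_contra hcon
    push_neg at hcon
    exact not_lt.2 (hsub1 hcon.le : q ≤ v) (Set.mem_Iio.1 hv)
  refine ⟨q, ?_, hFq, hsub1, hsub2⟩
  have hIic : μ (Set.Iic q) = ENNReal.ofReal (1 - s) := by
    rw [← ENNReal.ofReal_toReal (measure_ne_top μ (Set.Iic q)), ← hF q, hFq]
  rw [← Set.compl_Iic, measure_compl measurableSet_Iic (measure_ne_top _ _), measure_univ, hIic]
  rw [← ENNReal.ofReal_one, ← ENNReal.ofReal_sub _ (by linarith)]
  norm_num

include hF hc in
lemma cdf_top_null : μ {v | 1 ≤ F v} = 0 := by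
  have key : ∀ m : ℕ, μ {v | 1 ≤ F v} ≤ ENNReal.ofReal (1 / (m + 2)) := by
    intro m
    have hs0 : (0:ℝ) < 1 / (m + 2) := by positivity
    have hs1 : (1:ℝ) / (m + 2) < 1 := by
      rw [div_lt_one (by positivity)]
      have : (0:ℝ) ≤ m := Nat.cast_nonneg m
      linarith
    obtain ⟨q, hq1, _, hq3, _⟩ := cdf_quantile hF hc hs0 hs1
    have hsub : {v | 1 ≤ F v} ⊆ Set.Ici q := fun v hv => by
      have hv' : (1:ℝ) ≤ F v := hv
      have hmem : v ∈ {v | 1 - 1 / ((m:ℝ) + 2) ≤ F v} := by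
        show (1:ℝ) - 1 / ((m:ℝ) + 2) ≤ F v; linarith
      exact hq3 hmem
    calc μ {v | 1 ≤ F v} ≤ μ (Set.Ici q) := measure_mono hsub
      _ = μ {q} + μ (Set.Ioi q) := by
          rw [← measure_union (by
              rw [Set.disjoint_iff]
              rintro y ⟨rfl, hy2⟩
              simp at hy2) measurableSet_Ioi]
          congr 1
          ext y
          simp only [Set.mem_Ici, Set.singleton_union, Set.mem_insert_iff, Set.mem_Ioi]
          constructor
          · intro h
            rcases eq_or_lt_of_le h with h | h
            · exact Or.inl h.symm
            · exact Or.inr h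
          · rintro (rfl | h)
            · exact le_refl _
            · exact h.le
      _ = ENNReal.ofReal (1 / (m + 2)) := by rw [cdf_atom hF hc, hq1, zero_add]
  have hlim : Tendsto (fun m : ℕ => ENNReal.ofReal (1 / (m + 2 : ℝ))) atTop (nhds 0) := by
    have h1 : Tendsto (fun m : ℕ => 1 / (m + 2 : ℝ)) atTop (nhds 0) := by
      have := (tendsto_atTop_add_const_right atTop (2:ℝ) tendsto_natCast_atTop_atTop).inv_tendsto_atTop
      simp only [one_div]; exact this
    have := (ENNReal.continuous_ofReal.tendsto 0).comp h1
    rw [ENNReal.ofReal_zero] at this; exact this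
  exact le_antisymm (ge_of_tendsto hlim (Eventually.of_forall key)) (zero_le)

end CDF


/-- The rank `R^n_{ij}` of `X_{ij}` among `X_{1j},…,X_{nj}` (with indices `0,…,n−1`):
the number of `i' < n` with `X_{i'j} ≤ X_{ij}`. -/
noncomputable def rankOf {Ωs : Type*} {d : ℕ} (X : ℕ → Ωs → Fin d → ℝ)
    (n i : ℕ) (j : Fin d) (ω : Ωs) : ℕ :=
  ((Finset.range n).filter fun i' => X i' ω j ≤ X i ω j).card

/-- The rank-based nonparametric estimator `ℓ̂_{n,k}` of the stable tail dependence
function. -/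
noncomputable def hatEll {Ωs : Type*} {d : ℕ} (X : ℕ → Ωs → Fin d → ℝ)
    (k n : ℕ) (ω : Ωs) (x : Fin d → ℝ) : ℝ :=
  (k : ℝ)⁻¹ * ∑ i ∈ Finset.range n,
    if ∃ j : Fin d, ((rankOf X n i j ω : ℝ) > (n : ℝ) + 1/2 - (k : ℝ) * x j)
    then (1:ℝ) else 0

section Emp
variable {Ωs : Type*} [MeasureSpace Ωs] [IsProbabilityMeasure (ℙ : Measure Ωs)] {d : ℕ}

/-- empirical sum of indicators -/
noncomputable def empSum (X : ℕ → Ωs → Fin d → ℝ) (n : ℕ) (S : Set (Fin d → ℝ)) (ω : Ωs) : ℝ :=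
  ∑ i ∈ Finset.range n, S.indicator (fun _ => (1:ℝ)) (X i ω)

lemma empSum_nonneg (X : ℕ → Ωs → Fin d → ℝ) (n : ℕ) (S : Set (Fin d → ℝ)) (ω : Ωs) :
    0 ≤ empSum X n S ω :=
  Finset.sum_nonneg fun i _ => Set.indicator_nonneg (fun _ _ => zero_le_one) _

lemma rank_count (X : ℕ → Ωs → Fin d → ℝ) (n i : ℕ) (j : Fin d) (ω : Ωs) :
    rankOf X n i j ω + ((Finset.range n).filter fun i' => X i ω j < X i' ω j).card = n := by
  unfold rankOf
  have heq : ((Finset.range n).filter fun i' => X i ω j < X i' ω j)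
      = ((Finset.range n).filter fun i' => ¬ X i' ω j ≤ X i ω j) := by
    apply Finset.filter_congr
    intro i' _
    simp [not_le]
  rw [heq, Finset.card_filter_add_card_filter_not (fun i' => X i' ω j ≤ X i ω j),
    Finset.card_range]

lemma rank_cond_iff (X : ℕ → Ωs → Fin d → ℝ) {n kk i : ℕ} (j : Fin d) (ω : Ωs) (xj : ℝ) :
    ((rankOf X n i j ω : ℝ) > (n : ℝ) + 1/2 - (kk : ℝ) * xj) ↔
      ((((Finset.range n).filter fun i' => X i ω j < X i' ω j).card : ℝ) < kk * xj - 1/2) := by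
  have h := rank_count X n i j ω
  have h' : (rankOf X n i j ω : ℝ)
      + (((Finset.range n).filter fun i' => X i ω j < X i' ω j).card : ℝ) = n := by
    exact_mod_cast congrArg (Nat.cast : ℕ → ℝ) h
  constructor <;> intro hh <;> linarith

lemma hatEll_ge (X : ℕ → Ωs → Fin d → ℝ) {n kk : ℕ} (ω : Ωs) (x : Fin d → ℝ)
    (J : Finset (Fin d)) (q : Fin d → ℝ)
    (hq : ∀ j ∈ J, ((((Finset.range n).filter fun i' => q j < X i' ω j).card : ℝ)
      < (kk : ℝ) * x j - 1/2)) :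
    (kk : ℝ)⁻¹ * empSum X n {v | ∃ j ∈ J, q j < v j} ω ≤ hatEll X kk n ω x := by
  unfold hatEll empSum
  refine mul_le_mul_of_nonneg_left ?_ (by positivity)
  refine Finset.sum_le_sum fun i _ => ?_
  by_cases h : X i ω ∈ {v : Fin d → ℝ | ∃ j ∈ J, q j < v j}
  · rw [Set.indicator_of_mem h, if_pos]
    obtain ⟨j, hjJ, hj⟩ := h
    refine ⟨j, (rank_cond_iff X j ω (x j)).2 ?_⟩
    refine lt_of_le_of_lt ?_ (hq j hjJ)
    have hsub : ((Finset.range n).filter fun i' => X i ω j < X i' ω j)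
        ⊆ ((Finset.range n).filter fun i' => q j < X i' ω j) :=
      Finset.monotone_filter_right _ fun i' _ hi' => lt_trans hj hi'
    exact_mod_cast Finset.card_le_card hsub
  · rw [Set.indicator_of_notMem h]
    split <;> norm_num

lemma hatEll_le (X : ℕ → Ωs → Fin d → ℝ) {n kk : ℕ} (ω : Ωs) (x : Fin d → ℝ)
    (q : Fin d → ℝ)
    (hq : ∀ j : Fin d, (kk : ℝ) * x j - 1/2
      ≤ (((Finset.range n).filter fun i' => q j < X i' ω j).card : ℝ)) :
    hatEll X kk n ω x ≤ (kk : ℝ)⁻¹ * empSum X n {v | ∃ j, q j < v j} ω := by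
  unfold hatEll empSum
  refine mul_le_mul_of_nonneg_left ?_ (by positivity)
  refine Finset.sum_le_sum fun i _ => ?_
  by_cases h : ∃ j : Fin d, ((rankOf X n i j ω : ℝ) > (n : ℝ) + 1/2 - (kk : ℝ) * x j)
  · rw [if_pos h, Set.indicator_of_mem]
    obtain ⟨j, hj⟩ := h
    have hj' := (rank_cond_iff X j ω (x j)).1 hj
    show ∃ j : Fin d, q j < X i ω j
    refine ⟨j, ?_⟩
    by_contra hle
    push_neg at hle
    have hsub : ((Finset.range n).filter fun i' => q j < X i' ω j)
        ⊆ ((Finset.range n).filter fun i' => X i ω j < X i' ω j) :=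
      Finset.monotone_filter_right _ fun i' _ hi' => lt_of_le_of_lt hle hi'
    have := Finset.card_le_card hsub
    have : ((((Finset.range n).filter fun i' => q j < X i' ω j).card : ℝ))
        ≤ (((Finset.range n).filter fun i' => X i ω j < X i' ω j).card : ℝ) := by
      exact_mod_cast this
    linarith [hq j]
  · rw [if_neg h]
    exact Set.indicator_nonneg (fun _ _ => zero_le_one) _


lemma empSum_card (X : ℕ → Ωs → Fin d → ℝ) (n : ℕ) (ω : Ωs) (j : Fin d) (q : ℝ) :
    empSum X n {v | q < v j} ω
      = (((Finset.range n).filter fun i' => q < X i' ω j).card : ℝ) := by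
  classical
  unfold empSum
  have h1 : ∀ i, ({v : Fin d → ℝ | q < v j}).indicator (fun _ => (1:ℝ)) (X i ω)
      = if q < X i ω j then (1:ℝ) else 0 := by
    intro i
    simp [Set.indicator_apply, Set.mem_setOf_eq]
  rw [Finset.sum_congr rfl fun i _ => h1 i, Finset.sum_boole]


lemma hatEll_mono (X : ℕ → Ωs → Fin d → ℝ) (kk n : ℕ) (ω : Ωs) {x x' : Fin d → ℝ}
    (h : ∀ j, x j ≤ x' j) : hatEll X kk n ω x ≤ hatEll X kk n ω x' := by
  unfold hatEll
  refine mul_le_mul_of_nonneg_left ?_ (by positivity)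
  refine Finset.sum_le_sum fun i _ => ?_
  by_cases hc : ∃ j : Fin d, ((rankOf X n i j ω : ℝ) > (n:ℝ) + 1/2 - (kk:ℝ) * x j)
  · rw [if_pos hc, if_pos]
    obtain ⟨j, hj⟩ := hc
    refine ⟨j, ?_⟩
    have hmul : (kk:ℝ) * x j ≤ (kk:ℝ) * x' j :=
      mul_le_mul_of_nonneg_left (h j) (Nat.cast_nonneg kk)
    have hj' : (n:ℝ) + 1/2 - (kk:ℝ) * x j < (rankOf X n i j ω : ℝ) := hj
    show (n:ℝ) + 1/2 - (kk:ℝ) * x' j < (rankOf X n i j ω : ℝ)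
    linarith
  · rw [if_neg hc]
    split <;> norm_num

/-- Master weak law of large numbers for triangular arrays of indicators. -/
lemma lln (X : ℕ → Ωs → Fin d → ℝ) (hXmeas : ∀ i, Measurable (X i))
    (hindep : iIndepFun X ℙ)
    (hident : ∀ i, Measure.map (X i) ℙ = Measure.map (X 0) ℙ)
    (k : ℕ → ℕ) (hk1 : ∀ᶠ n in atTop, 1 ≤ k n)
    (hkinfty : Tendsto (fun n => (k n : ℝ)) atTop atTop)
    (S : ℕ → Set (Fin d → ℝ)) (hS : ∀ n, MeasurableSet (S n)) (c : ℝ)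
    (hc : Tendsto (fun n : ℕ => ((n : ℝ) / (k n : ℝ)) * (ℙ (X 0 ⁻¹' S n)).toReal) atTop (nhds c))
    {γ : ℝ} (hγ : 0 < γ) :
    Tendsto (fun n => ℙ {ω | γ ≤ |(k n : ℝ)⁻¹ * empSum X n (S n) ω - c|}) atTop (nhds 0) := by
  classical
  set p : ℕ → ℝ := fun n => (ℙ (X 0 ⁻¹' S n)).toReal with hp
  set m : ℕ → ℝ := fun n : ℕ => ((n : ℝ) / (k n : ℝ)) * p n with hm
  have hmc' : Tendsto m atTop (nhds c) := hc
  have hpnn : ∀ n, 0 ≤ p n := fun n => ENNReal.toReal_nonneg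
  -- the indicator variables
  set Y : ℕ → ℕ → Ωs → ℝ := fun n i => (X i ⁻¹' S n).indicator (fun _ => (1:ℝ)) with hY
  have hYdef : ∀ n i ω, Y n i ω = (S n).indicator (fun _ => (1:ℝ)) (X i ω) := fun n i ω => rfl
  have hYmeas : ∀ n i, Measurable (Y n i) :=
    fun n i => measurable_const.indicator ((hXmeas i) (hS n))
  have hYmem : ∀ n i, MemLp (Y n i) 2 ℙ :=
    fun n i => memLp_indicator_const 2 ((hXmeas i) (hS n)) 1 (Or.inr (measure_ne_top _ _))
  have hpi : ∀ n i, ℙ (X i ⁻¹' S n) = ℙ (X 0 ⁻¹' S n) := by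
    intro n i
    rw [← Measure.map_apply (hXmeas i) (hS n), ← Measure.map_apply (hXmeas 0) (hS n), hident i]
  have hEY : ∀ n i, ∫ ω, Y n i ω ∂ℙ = p n := by
    intro n i
    rw [hY]
    simp only
    rw [integral_indicator_const (1:ℝ) ((hXmeas i) (hS n)), smul_eq_mul, mul_one, measureReal_def, hpi n i]
  have hYsq : ∀ n i, (Y n i) ^ 2 = Y n i := by
    intro n i
    funext ω
    simp only [Pi.pow_apply, hYdef]
    by_cases hmem : X i ω ∈ S n <;>
      simp [Set.indicator_of_mem, Set.indicator_of_notMem, hmem]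
  have hVarY : ∀ n i, variance (Y n i) ℙ = p n - (p n)^2 := by
    intro n i
    rw [variance_eq_sub (hYmem n i), hYsq n i, hEY n i]
  -- the sum
  set W : ℕ → Ωs → ℝ := fun n ω => ∑ i ∈ Finset.range n, Y n i ω with hW
  have hWsum : ∀ n, W n = ∑ i ∈ Finset.range n, Y n i := by
    intro n; funext ω; simp [hW, Finset.sum_apply]
  have hWmem : ∀ n, MemLp (W n) 2 ℙ := by
    intro n; rw [hWsum n]; exact memLp_finset_sum' _ fun i _ => hYmem n i
  have hEW : ∀ n, ∫ ω, W n ω ∂ℙ = n * p n := by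
    intro n
    rw [hW]
    simp only
    rw [integral_finset_sum _ fun i _ => (hYmem n i).integrable one_le_two]
    simp [hEY]
  have hVarW : ∀ n, variance (W n) ℙ = n * (p n - (p n)^2) := by
    intro n
    rw [hWsum n, IndepFun.variance_sum (fun i _ => hYmem n i) ?_]
    · simp [hVarY]; ring
    · intro i _ j _ hij
      exact (hindep.indepFun hij).comp
        (measurable_const.indicator (hS n)) (measurable_const.indicator (hS n))
  have hempW : ∀ n ω, empSum X n (S n) ω = W n ω := by
    intro n ω
    rfl
  -- upper bound sequence
  set u : ℕ → ℝ≥0∞ := fun n => ENNReal.ofReal (m n / ((γ/2)^2 * k n)) with hu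
  have hu0 : Tendsto u atTop (nhds 0) := by
    have h1 : Tendsto (fun n => m n / ((γ/2)^2 * k n)) atTop (nhds 0) := by
      have h2 : Tendsto (fun n => (γ/2)^2 * (k n : ℝ)) atTop atTop :=
        (hkinfty.const_mul_atTop (by positivity))
      exact hmc'.div_atTop h2
    have := (ENNReal.continuous_ofReal.tendsto 0).comp h1
    rw [ENNReal.ofReal_zero] at this; exact this
  -- eventual bound
  have hev : ∀ᶠ n in atTop, ℙ {ω | γ ≤ |(k n : ℝ)⁻¹ * empSum X n (S n) ω - c|} ≤ u n := by
    filter_upwards [hk1, hmc'.eventually (eventually_abs_sub_lt c (by positivity : (0:ℝ) < γ/2))]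
      with n hkn hmc
    have hkpos : (0:ℝ) < k n := by exact_mod_cast hkn
    have hnp : (n : ℝ) * p n = m n * k n := by
      show (n:ℝ) * p n = (n:ℝ) / k n * p n * k n
      field_simp
    have hsub : {ω | γ ≤ |(k n : ℝ)⁻¹ * empSum X n (S n) ω - c|}
        ⊆ {ω | γ/2 * k n ≤ |W n ω - ∫ ω', W n ω' ∂ℙ|} := by
      intro ω hω
      simp only [Set.mem_setOf_eq] at hω ⊢
      rw [hEW n]
      have h3 : (k n : ℝ)⁻¹ * empSum X n (S n) ω - m n
          = (k n : ℝ)⁻¹ * (W n ω - n * p n) := by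
        rw [hempW n ω, hnp]
        field_simp
      have h4 : γ/2 ≤ |(k n : ℝ)⁻¹ * empSum X n (S n) ω - m n| := by
        have := abs_sub_abs_le_abs_sub ((k n : ℝ)⁻¹ * empSum X n (S n) ω - c) (m n - c)
        have h5 : ((k n : ℝ)⁻¹ * empSum X n (S n) ω - c) - (m n - c)
            = (k n : ℝ)⁻¹ * empSum X n (S n) ω - m n := by ring
        rw [h5] at this
        have habs : |m n - c| < γ/2 := hmc
        linarith [abs_nonneg ((k n : ℝ)⁻¹ * empSum X n (S n) ω - c),
          le_abs_self ((k n : ℝ)⁻¹ * empSum X n (S n) ω - c)]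
      rw [h3, abs_mul, abs_inv, abs_of_pos hkpos] at h4
      calc γ/2 * k n ≤ ((k n : ℝ)⁻¹ * |W n ω - n * p n|) * k n :=
            mul_le_mul_of_nonneg_right h4 hkpos.le
        _ = |W n ω - n * p n| := by field_simp
    refine le_trans (measure_mono hsub) ?_
    refine le_trans (meas_ge_le_variance_div_sq (hWmem n) (by positivity)) ?_
    refine ENNReal.ofReal_le_ofReal ?_
    rw [hVarW n]
    rw [div_le_div_iff₀ (by positivity) (by positivity)]
    have hb1 : (n : ℝ) * (p n - (p n)^2) ≤ n * p n := by
      have : (0:ℝ) ≤ (p n)^2 := sq_nonneg _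
      have hn0 : (0:ℝ) ≤ n := Nat.cast_nonneg n
      nlinarith
    have hmnn : 0 ≤ m n := mul_nonneg (by positivity) (hpnn n)
    calc (n : ℝ) * (p n - (p n)^2) * ((γ/2)^2 * k n) ≤ (n * p n) * ((γ/2)^2 * k n) :=
          mul_le_mul_of_nonneg_right hb1 (by positivity)
      _ = m n * ((γ/2 * k n)^2) := by rw [hnp]; ring
      _ ≤ m n * ((γ/2 * k n)^2) := le_refl _
  -- squeeze
  refine tendsto_of_tendsto_of_tendsto_of_le_of_le' tendsto_const_nhds hu0
    (Eventually.of_forall fun n => zero_le) hev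

end Emp

section Main
variable {Ωs : Type*} [MeasureSpace Ωs] [IsProbabilityMeasure (ℙ : Measure Ωs)]
  {d : ℕ}
  {X : ℕ → Ωs → Fin d → ℝ} (hXmeas : ∀ i, Measurable (X i))
  {F : Fin d → ℝ → ℝ} (hF : ∀ j t, F j t = (ℙ {ω | X 0 ω j ≤ t}).toReal)
  (hFcont : ∀ j, Continuous (F j))

include hXmeas hF hFcont in
lemma margin_M1 (j : Fin d) {s : ℝ} (hs0 : 0 ≤ s) (hs1 : s < 1) :
    ℙ {ω | 1 - s ≤ F j (X 0 ω j)} = ENNReal.ofReal s := by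
  classical
  have hXj : Measurable (fun ω => X 0 ω j) := (measurable_pi_apply j).comp (hXmeas 0)
  set ν : Measure ℝ := Measure.map (fun ω => X 0 ω j) ℙ with hν
  haveI : IsProbabilityMeasure ν := Measure.isProbabilityMeasure_map hXj.aemeasurable
  have hFν : ∀ t, F j t = (ν (Set.Iic t)).toReal := by
    intro t
    rw [hF j t, hν, Measure.map_apply hXj measurableSet_Iic]
    rfl
  have hmeasset : MeasurableSet {v : ℝ | 1 - s ≤ F j v} :=
    (isClosed_le continuous_const (hFcont j)).measurableSet
  have hpre : {ω | 1 - s ≤ F j (X 0 ω j)} = (fun ω => X 0 ω j) ⁻¹' {v | 1 - s ≤ F j v} := rfl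
  have hmap : ℙ ((fun ω => X 0 ω j) ⁻¹' {v | 1 - s ≤ F j v}) = ν {v | 1 - s ≤ F j v} :=
    (Measure.map_apply hXj hmeasset).symm
  rw [hpre, hmap]
  rcases eq_or_lt_of_le hs0 with rfl | hs0'
  · simpa using cdf_top_null (μ := ν) hFν (hFcont j)
  · obtain ⟨q, hq1, _, hq3, hq4⟩ := cdf_quantile (μ := ν) hFν (hFcont j) hs0' hs1
    refine le_antisymm ?_ ?_
    · have hsplit : Set.Ici q ⊆ {q} ∪ Set.Ioi q := by
        intro y hy
        rcases eq_or_lt_of_le (Set.mem_Ici.1 hy) with h | h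
        · exact Or.inl h.symm
        · exact Or.inr h
      refine le_trans (measure_mono (subset_trans hq3 hsplit)) ?_
      refine le_trans (measure_union_le _ _) ?_
      rw [cdf_atom hFν (hFcont j) q, hq1, zero_add]
    · rw [← hq1]
      exact measure_mono hq4

include hXmeas hF hFcont in
lemma margin_M2 (j : Fin d) {s : ℝ} (hs0 : 0 < s) (hs1 : s < 1) :
    ∃ q : ℝ, ℙ {ω | q < X 0 ω j} = ENNReal.ofReal s ∧
      ℙ ({ω | 1 - s ≤ F j (X 0 ω j)} \ {ω | q < X 0 ω j}) = 0 ∧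
      {ω | q < X 0 ω j} ⊆ {ω | 1 - s ≤ F j (X 0 ω j)} := by
  classical
  have hXj : Measurable (fun ω => X 0 ω j) := (measurable_pi_apply j).comp (hXmeas 0)
  set ν : Measure ℝ := Measure.map (fun ω => X 0 ω j) ℙ with hν
  haveI : IsProbabilityMeasure ν := Measure.isProbabilityMeasure_map hXj.aemeasurable
  have hFν : ∀ t, F j t = (ν (Set.Iic t)).toReal := by
    intro t
    rw [hF j t, hν, Measure.map_apply hXj measurableSet_Iic]
    rfl
  obtain ⟨q, hq1, _, hq3, hq4⟩ := cdf_quantile (μ := ν) hFν (hFcont j) hs0 hs1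
  refine ⟨q, ?_, ?_, ?_⟩
  · have : {ω | q < X 0 ω j} = (fun ω => X 0 ω j) ⁻¹' Set.Ioi q := rfl
    have hmap : ℙ ((fun ω => X 0 ω j) ⁻¹' Set.Ioi q) = ν (Set.Ioi q) :=
      (Measure.map_apply hXj measurableSet_Ioi).symm
    rw [this, hmap, hq1]
  · have hsub : {ω | 1 - s ≤ F j (X 0 ω j)} \ {ω | q < X 0 ω j}
        ⊆ (fun ω => X 0 ω j) ⁻¹' {q} := by
      rintro ω ⟨h1, h2⟩
      have hIci : q ≤ X 0 ω j := hq3 h1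
      have : ¬ q < X 0 ω j := h2
      have : X 0 ω j = q := le_antisymm (not_lt.1 this) hIci
      simpa using this
    refine measure_mono_null hsub ?_
    have hmap : ℙ ((fun ω => X 0 ω j) ⁻¹' {q}) = ν {q} :=
      (Measure.map_apply hXj (measurableSet_singleton q)).symm
    rw [hmap]
    exact cdf_atom hFν (hFcont j) q
  · intro ω hω
    exact hq4 hω

include hXmeas hF hFcont in
lemma ell_lip {ℓ : (Fin d → ℝ) → ℝ}
    (htail : ∀ x : Fin d → ℝ, (∀ j, 0 ≤ x j) →
      Tendsto (fun t : ℝ => t⁻¹ * (ℙ {ω | ∃ j, 1 - F j (X 0 ω j) ≤ t * x j}).toReal)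
        (nhdsWithin 0 (Set.Ioi 0)) (nhds (ℓ x)))
    (y x : Fin d → ℝ) (hy0 : ∀ j, 0 ≤ y j) (hyx : ∀ j, y j ≤ x j) :
    ℓ y ≤ ℓ x ∧ ℓ x ≤ ℓ y + ∑ j, (x j - y j) := by
  classical
  have hx0 : ∀ j, 0 ≤ x j := fun j => le_trans (hy0 j) (hyx j)
  have hXj : ∀ j : Fin d, Measurable (fun ω => X 0 ω j) :=
    fun j => (measurable_pi_apply j).comp (hXmeas 0)
  have hmeasA : ∀ (j : Fin d) (s : ℝ), MeasurableSet {ω | 1 - s ≤ F j (X 0 ω j)} := by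
    intro j s
    exact (hXj j) ((isClosed_le continuous_const (hFcont j)).measurableSet)
  constructor
  · refine le_of_tendsto_of_tendsto (htail y hy0) (htail x hx0) ?_
    filter_upwards [eventually_mem_nhdsWithin] with t (ht : (0:ℝ) < t)
    refine mul_le_mul_of_nonneg_left ?_ (by positivity)
    refine ENNReal.toReal_mono (measure_ne_top _ _) (measure_mono ?_)
    rintro ω ⟨j, hj⟩
    exact ⟨j, le_trans hj (mul_le_mul_of_nonneg_left (hyx j) ht.le)⟩
  · set c : ℝ := (1 + ∑ j, x j)⁻¹ with hc
    have hsum0 : 0 ≤ ∑ j, x j := Finset.sum_nonneg fun j _ => hx0 j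
    have hcpos : 0 < c := by rw [hc]; positivity
    have hxle : ∀ j, x j ≤ 1 + ∑ j', x j' := by
      intro j
      have : x j ≤ ∑ j', x j' :=
        Finset.single_le_sum (fun j' _ => hx0 j') (Finset.mem_univ j)
      linarith
    have hev : ∀ᶠ t in nhdsWithin (0:ℝ) (Set.Ioi 0),
        t⁻¹ * (ℙ {ω | ∃ j, 1 - F j (X 0 ω j) ≤ t * x j}).toReal
          ≤ t⁻¹ * (ℙ {ω | ∃ j, 1 - F j (X 0 ω j) ≤ t * y j}).toReal + ∑ j, (x j - y j) := by
      filter_upwards [eventually_mem_nhdsWithin,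
        eventually_nhdsWithin_of_eventually_nhds (eventually_abs_sub_lt 0 hcpos)]
        with t (ht : (0:ℝ) < t) htc
      rw [sub_zero] at htc
      have htc' : t < c := lt_of_le_of_lt (le_abs_self t) htc
      have htx1 : ∀ j, t * x j < 1 := by
        intro j
        have h1 : t * x j ≤ t * (1 + ∑ j', x j') :=
          mul_le_mul_of_nonneg_left (hxle j) ht.le
        have h2 : t * (1 + ∑ j', x j') < c * (1 + ∑ j', x j') :=
          mul_lt_mul_of_pos_right htc' (by positivity)
        have h3 : c * (1 + ∑ j', x j') = 1 := by
          rw [hc]; field_simp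
        linarith
      -- set inclusion
      have hsub : {ω | ∃ j, 1 - F j (X 0 ω j) ≤ t * x j}
          ⊆ {ω | ∃ j, 1 - F j (X 0 ω j) ≤ t * y j}
            ∪ ⋃ j ∈ (Finset.univ : Finset (Fin d)),
              ({ω | 1 - t * x j ≤ F j (X 0 ω j)} \ {ω | 1 - t * y j ≤ F j (X 0 ω j)}) := by
        rintro ω ⟨j, hj⟩
        by_cases hy : 1 - F j (X 0 ω j) ≤ t * y j
        · exact Or.inl ⟨j, hy⟩
        · refine Or.inr ?_
          refine Set.mem_biUnion (Finset.mem_coe.2 (Finset.mem_univ j)) ?_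
          constructor
          · show 1 - t * x j ≤ F j (X 0 ω j)
            linarith
          · show ¬ (1 - t * y j ≤ F j (X 0 ω j))
            intro hcontra
            exact hy (by linarith)
      have hdiff : ∀ j : Fin d,
          ℙ ({ω | 1 - t * x j ≤ F j (X 0 ω j)} \ {ω | 1 - t * y j ≤ F j (X 0 ω j)})
            = ENNReal.ofReal (t * (x j - y j)) := by
        intro j
        have hBsubA : {ω | 1 - t * y j ≤ F j (X 0 ω j)} ⊆ {ω | 1 - t * x j ≤ F j (X 0 ω j)} := by
          intro ω hω
          have h1 : t * y j ≤ t * x j := mul_le_mul_of_nonneg_left (hyx j) ht.le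
          show 1 - t * x j ≤ F j (X 0 ω j)
          have h2 : 1 - t * y j ≤ F j (X 0 ω j) := hω
          linarith
        rw [measure_diff hBsubA ((hmeasA j (t * y j)).nullMeasurableSet) (measure_ne_top _ _)]
        rw [margin_M1 hXmeas hF hFcont j (mul_nonneg ht.le (hx0 j)) (htx1 j),
          margin_M1 hXmeas hF hFcont j (mul_nonneg ht.le (hy0 j))
            (lt_of_le_of_lt (mul_le_mul_of_nonneg_left (hyx j) ht.le) (htx1 j)),
          ← ENNReal.ofReal_sub _ (mul_nonneg ht.le (hy0 j))]
        congr 1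
        ring
      have hub : ℙ {ω | ∃ j, 1 - F j (X 0 ω j) ≤ t * x j}
          ≤ ℙ {ω | ∃ j, 1 - F j (X 0 ω j) ≤ t * y j}
            + ∑ j, ENNReal.ofReal (t * (x j - y j)) := by
        refine le_trans (measure_mono hsub) ?_
        refine le_trans (measure_union_le _ _) ?_
        refine add_le_add le_rfl ?_
        refine le_trans (measure_biUnion_finset_le _ _) ?_
        refine Finset.sum_le_sum fun j _ => ?_
        rw [hdiff j]
      have htoReal : (ℙ {ω | ∃ j, 1 - F j (X 0 ω j) ≤ t * x j}).toReal
          ≤ (ℙ {ω | ∃ j, 1 - F j (X 0 ω j) ≤ t * y j}).toReal + ∑ j, t * (x j - y j) := by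
        have hfin : ℙ {ω | ∃ j, 1 - F j (X 0 ω j) ≤ t * y j}
            + ∑ j, ENNReal.ofReal (t * (x j - y j)) ≠ ⊤ := by
          refine ENNReal.add_ne_top.2 ⟨measure_ne_top _ _, ?_⟩
          exact (ENNReal.sum_lt_top.mpr fun j _ => ENNReal.ofReal_lt_top).ne
        refine le_trans (ENNReal.toReal_mono hfin hub) ?_
        rw [ENNReal.toReal_add (measure_ne_top _ _)
          ((ENNReal.sum_lt_top.mpr fun j _ => ENNReal.ofReal_lt_top).ne)]
        rw [ENNReal.toReal_sum (fun j _ => ENNReal.ofReal_ne_top)]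
        refine add_le_add le_rfl (Finset.sum_le_sum fun j _ => ?_)
        rw [ENNReal.toReal_ofReal (mul_nonneg ht.le (sub_nonneg.2 (hyx j)))]
      calc t⁻¹ * (ℙ {ω | ∃ j, 1 - F j (X 0 ω j) ≤ t * x j}).toReal
          ≤ t⁻¹ * ((ℙ {ω | ∃ j, 1 - F j (X 0 ω j) ≤ t * y j}).toReal + ∑ j, t * (x j - y j)) :=
            mul_le_mul_of_nonneg_left htoReal (by positivity)
        _ = t⁻¹ * (ℙ {ω | ∃ j, 1 - F j (X 0 ω j) ≤ t * y j}).toReal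
            + t⁻¹ * t * (∑ j, (x j - y j)) := by
            rw [← Finset.mul_sum]; ring
        _ = t⁻¹ * (ℙ {ω | ∃ j, 1 - F j (X 0 ω j) ≤ t * y j}).toReal + ∑ j, (x j - y j) := by
            rw [inv_mul_cancel₀ ht.ne', one_mul]
    exact le_of_tendsto_of_tendsto (htail x hx0)
      ((htail y hy0).add tendsto_const_nhds) hev

include hXmeas hF hFcont in
lemma pointwise {ℓ : (Fin d → ℝ) → ℝ} (hd : 0 < d)
    (hindep : iIndepFun X ℙ)
    (hident : ∀ i, Measure.map (X i) ℙ = Measure.map (X 0) ℙ)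
    (htail : ∀ x : Fin d → ℝ, (∀ j, 0 ≤ x j) →
      Tendsto (fun t : ℝ => t⁻¹ * (ℙ {ω | ∃ j, 1 - F j (X 0 ω j) ≤ t * x j}).toReal)
        (nhdsWithin 0 (Set.Ioi 0)) (nhds (ℓ x)))
    (k : ℕ → ℕ) (hk1 : ∀ n, 1 ≤ n → 1 ≤ k n ∧ k n ≤ n)
    (hkinfty : Tendsto (fun n => (k n : ℝ)) atTop atTop)
    (hkn : Tendsto (fun n => (k n : ℝ) / n) atTop (nhds 0))
    (x : Fin d → ℝ) (hx0 : ∀ j, 0 ≤ x j) {ε : ℝ} (hε : 0 < ε) :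
    Tendsto (fun n => ℙ {ω | ε ≤ |hatEll X (k n) n ω x - ℓ x|}) atTop (nhds 0) := by
  classical
  set t : ℕ → ℝ := fun n => (k n : ℝ) / n with ht
  have hk1' : ∀ᶠ n in atTop, 1 ≤ k n := by
    filter_upwards [eventually_ge_atTop 1] with n hn
    exact (hk1 n hn).1
  -- δ and γ
  set δ : ℝ := ε / (4 * d) with hδ
  have hδpos : 0 < δ := by
    rw [hδ]
    have : (0:ℝ) < d := by exact_mod_cast hd
    positivity
  have hdδ : (d : ℝ) * δ = ε / 4 := by
    rw [hδ]
    have hd0 : (d:ℝ) ≠ 0 := by positivity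
    field_simp
  set γ : ℝ := ε / 4 with hγ
  have hγpos : 0 < γ := by rw [hγ]; positivity
  -- J and modified points
  set J : Finset (Fin d) := Finset.univ.filter (fun j => δ < x j) with hJ
  set ym : Fin d → ℝ := fun j => if δ < x j then x j - δ else 0 with hym
  set yp : Fin d → ℝ := fun j => x j + δ with hyp
  have hym0 : ∀ j, 0 ≤ ym j := by
    intro j
    rw [hym]
    dsimp only
    split
    · linarith
    · exact le_refl 0
  have hymx : ∀ j, ym j ≤ x j := by
    intro j
    rw [hym]
    dsimp only
    split
    · linarith
    · exact hx0 j
  have hxyp : ∀ j, x j ≤ yp j := fun j => by rw [hyp]; dsimp only; linarith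
  have hyp0 : ∀ j, 0 ≤ yp j := fun j => le_trans (hx0 j) (hxyp j)
  have hyppos : ∀ j, 0 < yp j := fun j => by
    have := hx0 j; rw [hyp]; dsimp only; linarith
  have hympos : ∀ j ∈ J, 0 < ym j := by
    intro j hj
    rw [hJ] at hj
    have := (Finset.mem_filter.1 hj).2
    rw [hym]; dsimp only; rw [if_pos this]; linarith
  have hymJ : ∀ j ∈ J, ym j = x j - δ := by
    intro j hj
    rw [hJ] at hj
    have := (Finset.mem_filter.1 hj).2
    rw [hym]; dsimp only; rw [if_pos this]
  have hymnJ : ∀ j ∉ J, ym j = 0 := by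
    intro j hj
    rw [hJ] at hj
    have : ¬ δ < x j := fun h => hj (Finset.mem_filter.2 ⟨Finset.mem_univ j, h⟩)
    rw [hym]; dsimp only; rw [if_neg this]
  -- ℓ bounds
  obtain ⟨hℓm1, hℓl1⟩ := ell_lip hXmeas hF hFcont htail ym x hym0 hymx
  obtain ⟨hℓm2, hℓl2⟩ := ell_lip hXmeas hF hFcont htail x yp hx0 hxyp
  have hsum1 : ∑ j, (x j - ym j) ≤ (d:ℝ) * δ := by
    have : ∀ j ∈ Finset.univ, x j - ym j ≤ δ := by
      intro j _
      by_cases h : j ∈ J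
      · rw [hymJ j h]; linarith
      · rw [hymnJ j h]
        have : ¬ δ < x j := by
          intro hcon
          exact h (by rw [hJ]; exact Finset.mem_filter.2 ⟨Finset.mem_univ j, hcon⟩)
        push_neg at this
        linarith
    calc ∑ j, (x j - ym j) ≤ ∑ _j : Fin d, δ := Finset.sum_le_sum this
      _ = (d:ℝ) * δ := by simp [mul_comm]
  have hsum2 : ∑ j, (yp j - x j) = (d:ℝ) * δ := by
    have : ∀ j, yp j - x j = δ := fun j => by rw [hyp]; dsimp only; ring
    simp only [this]
    simp [mul_comm]
  have hℓ1 : ℓ x ≤ ℓ ym + ε/4 := by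
    have := hℓl1
    have h2 := hsum1
    rw [hdδ] at h2
    linarith
  have hℓ2 : ℓ yp ≤ ℓ x + ε/4 := by
    have := hℓl2
    rw [hsum2, hdδ] at this
    linarith
  -- quantile choice
  have hQex : ∀ (j : Fin d) (s : ℝ), ∃ q : ℝ, 0 < s → s < 1 →
      (ℙ {ω | q < X 0 ω j} = ENNReal.ofReal s ∧
        ℙ ({ω | 1 - s ≤ F j (X 0 ω j)} \ {ω | q < X 0 ω j}) = 0 ∧
        {ω | q < X 0 ω j} ⊆ {ω | 1 - s ≤ F j (X 0 ω j)}) := by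
    intro j s
    by_cases h : 0 < s ∧ s < 1
    · obtain ⟨q, h1, h2, h3⟩ := margin_M2 hXmeas hF hFcont j h.1 h.2
      exact ⟨q, fun _ _ => ⟨h1, h2, h3⟩⟩
    · refine ⟨0, fun hs1 hs2 => absurd ⟨hs1, hs2⟩ h⟩
  choose Q hQspec using hQex
  set qp : ℕ → Fin d → ℝ := fun n j => Q j (t n * yp j) with hqp
  set qm : ℕ → Fin d → ℝ := fun n j => Q j (t n * ym j) with hqm
  -- good n
  set C : ℝ := 1 + ∑ j, yp j with hC
  have hCpos : 0 < C := by
    rw [hC]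
    have : 0 ≤ ∑ j, yp j := Finset.sum_nonneg fun j _ => hyp0 j
    linarith
  have hypleC : ∀ j, yp j ≤ C := by
    intro j
    rw [hC]
    have : yp j ≤ ∑ j', yp j' := Finset.single_le_sum (fun j' _ => hyp0 j') (Finset.mem_univ j)
    linarith
  have hgood : ∀ᶠ n in atTop, (1 ≤ n ∧ 1 ≤ k n ∧ (∀ j, t n * yp j < 1) ∧ 1 ≤ (k n : ℝ) * δ) := by
    have h1 : ∀ᶠ n in atTop, |t n - 0| < C⁻¹ :=
      hkn.eventually (eventually_abs_sub_lt 0 (by positivity))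
    have h2 : ∀ᶠ n in atTop, δ⁻¹ ≤ (k n : ℝ) := hkinfty.eventually (eventually_ge_atTop δ⁻¹)
    filter_upwards [eventually_ge_atTop 1, h1, h2] with n hn htn hkδ
    have hk1n := (hk1 n hn).1
    refine ⟨hn, hk1n, ?_, ?_⟩
    · intro j
      have htnn : 0 ≤ t n := by
        rw [ht]
        have : (0:ℝ) ≤ k n := Nat.cast_nonneg _
        have : (0:ℝ) ≤ n := Nat.cast_nonneg _
        positivity
      rw [sub_zero, abs_of_nonneg htnn] at htn
      calc t n * yp j ≤ t n * C := mul_le_mul_of_nonneg_left (hypleC j) htnn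
        _ < C⁻¹ * C := mul_lt_mul_of_pos_right htn hCpos
        _ = 1 := inv_mul_cancel₀ hCpos.ne'
    · calc (1:ℝ) = δ⁻¹ * δ := (inv_mul_cancel₀ hδpos.ne').symm
        _ ≤ (k n : ℝ) * δ := mul_le_mul_of_nonneg_right hkδ hδpos.le
  have htpos : ∀ n, 1 ≤ n → 1 ≤ k n → 0 < t n := by
    intro n hn hkn1
    rw [ht]
    have h1 : (0:ℝ) < k n := by exact_mod_cast hkn1
    have h2 : (0:ℝ) < n := by exact_mod_cast hn
    positivity
  have httend : Tendsto t atTop (nhdsWithin 0 (Set.Ioi 0)) := by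
    rw [tendsto_nhdsWithin_iff]
    refine ⟨hkn, ?_⟩
    filter_upwards [eventually_ge_atTop 1, hk1'] with n hn hkn1
    exact htpos n hn hkn1
  have hinvt : ∀ n, 1 ≤ n → 1 ≤ k n → (t n)⁻¹ = (n : ℝ) / k n := by
    intro n hn hkn1
    rw [ht]
    dsimp only
    rw [inv_div]
  -- quantile properties for good n
  have hsp : ∀ n, 1 ≤ n → 1 ≤ k n → (∀ j, t n * yp j < 1) →
      ∀ j, (ℙ {ω | qp n j < X 0 ω j} = ENNReal.ofReal (t n * yp j) ∧
        ℙ ({ω | 1 - t n * yp j ≤ F j (X 0 ω j)} \ {ω | qp n j < X 0 ω j}) = 0 ∧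
        {ω | qp n j < X 0 ω j} ⊆ {ω | 1 - t n * yp j ≤ F j (X 0 ω j)}) := by
    intro n hn hk hlt j
    exact hQspec j (t n * yp j) (mul_pos (htpos n hn hk) (hyppos j)) (hlt j)
  have hsm : ∀ n, 1 ≤ n → 1 ≤ k n → (∀ j, t n * yp j < 1) →
      ∀ j ∈ J, (ℙ {ω | qm n j < X 0 ω j} = ENNReal.ofReal (t n * ym j) ∧
        ℙ ({ω | 1 - t n * ym j ≤ F j (X 0 ω j)} \ {ω | qm n j < X 0 ω j}) = 0 ∧
        {ω | qm n j < X 0 ω j} ⊆ {ω | 1 - t n * ym j ≤ F j (X 0 ω j)}) := by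
    intro n hn hk hlt j hj
    refine hQspec j (t n * ym j) (mul_pos (htpos n hn hk) (hympos j hj)) ?_
    calc t n * ym j ≤ t n * yp j :=
          mul_le_mul_of_nonneg_left (le_trans (hymx j) (hxyp j)) (htpos n hn hk).le
      _ < 1 := hlt j
  -- the sets
  set S2 : Fin d → ℕ → Set (Fin d → ℝ) := fun j n => {v | qp n j < v j} with hS2
  set S1 : Fin d → ℕ → Set (Fin d → ℝ) := fun j n => {v | qm n j < v j} with hS1
  set SUp : ℕ → Set (Fin d → ℝ) := fun n => {v | ∃ j, qp n j < v j} with hSUp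
  set SUm : ℕ → Set (Fin d → ℝ) := fun n => {v | ∃ j ∈ J, qm n j < v j} with hSUm
  have hS2meas : ∀ j n, MeasurableSet (S2 j n) := fun j n =>
    measurable_pi_apply j measurableSet_Ioi
  have hS1meas : ∀ j n, MeasurableSet (S1 j n) := fun j n =>
    measurable_pi_apply j measurableSet_Ioi
  have hSUpmeas : ∀ n, MeasurableSet (SUp n) := by
    intro n
    have : SUp n = ⋃ j, S2 j n := by
      rw [hSUp]; exact Set.setOf_exists _
    rw [this]
    exact MeasurableSet.iUnion fun j => hS2meas j n
  have hSUmmeas : ∀ n, MeasurableSet (SUm n) := by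
    intro n
    have : SUm n = ⋃ j ∈ J, S1 j n := by
      rw [hSUm]
      ext v
      simp only [Set.mem_setOf_eq, Set.mem_iUnion]
      constructor
      · rintro ⟨j, hj, h⟩; exact ⟨j, hj, h⟩
      · rintro ⟨j, hj, h⟩; exact ⟨j, hj, h⟩
    rw [this]
    exact MeasurableSet.biUnion J.countable_toSet fun j _ => hS1meas j n
  -- LLN for per-coordinate upper counts
  have hB2 : ∀ j : Fin d, Tendsto
      (fun n => ℙ {ω | δ/2 ≤ |(k n : ℝ)⁻¹ * empSum X n (S2 j n) ω - yp j|}) atTop (nhds 0) := by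
    intro j
    refine lln X hXmeas hindep hident k hk1' hkinfty (S2 j) (hS2meas j) (yp j) ?_
      (by positivity : (0:ℝ) < δ/2)
    refine Tendsto.congr' ?_ (tendsto_const_nhds : Tendsto (fun _ : ℕ => yp j) atTop _)
    filter_upwards [hgood] with n hgn
    obtain ⟨hn1, hkn1, hlt, -⟩ := hgn
    have h1 := (hsp n hn1 hkn1 hlt j).1
    have hpre : X 0 ⁻¹' S2 j n = {ω | qp n j < X 0 ω j} := rfl
    rw [hpre, h1, ENNReal.toReal_ofReal (mul_nonneg (htpos n hn1 hkn1).le (hyp0 j))]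
    rw [ht]
    dsimp only
    have hkpos : (0:ℝ) < k n := by exact_mod_cast hkn1
    have hnpos : (0:ℝ) < n := by exact_mod_cast hn1
    field_simp
  -- LLN for per-coordinate lower counts (j ∈ J)
  have hB1 : ∀ j ∈ J, Tendsto
      (fun n => ℙ {ω | δ/2 ≤ |(k n : ℝ)⁻¹ * empSum X n (S1 j n) ω - (x j - δ)|}) atTop (nhds 0) := by
    intro j hj
    refine lln X hXmeas hindep hident k hk1' hkinfty (S1 j) (hS1meas j) (x j - δ) ?_
      (by positivity : (0:ℝ) < δ/2)
    refine Tendsto.congr' ?_ (tendsto_const_nhds : Tendsto (fun _ : ℕ => x j - δ) atTop _)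
    filter_upwards [hgood] with n hgn
    obtain ⟨hn1, hkn1, hlt, -⟩ := hgn
    have h1 := (hsm n hn1 hkn1 hlt j hj).1
    have hpre : X 0 ⁻¹' S1 j n = {ω | qm n j < X 0 ω j} := rfl
    rw [hpre, h1, ENNReal.toReal_ofReal (mul_nonneg (htpos n hn1 hkn1).le (hym0 j))]
    rw [ht, ← hymJ j hj]
    dsimp only
    have hkpos : (0:ℝ) < k n := by exact_mod_cast hkn1
    have hnpos : (0:ℝ) < n := by exact_mod_cast hn1
    field_simp
  -- LLN for the upper union count
  have hBUp : Tendsto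
      (fun n => ℙ {ω | γ ≤ |(k n : ℝ)⁻¹ * empSum X n (SUp n) ω - ℓ yp|}) atTop (nhds 0) := by
    refine lln X hXmeas hindep hident k hk1' hkinfty SUp hSUpmeas (ℓ yp) ?_ hγpos
    have hbase := (htail yp hyp0).comp httend
    refine Tendsto.congr' ?_ hbase
    filter_upwards [hgood] with n hgn
    obtain ⟨hn1, hkn1, hlt, -⟩ := hgn
    have hPeq : ℙ {ω | ∃ j, 1 - F j (X 0 ω j) ≤ t n * yp j} = ℙ (X 0 ⁻¹' SUp n) := by
      have hpre : X 0 ⁻¹' SUp n = {ω | ∃ j, qp n j < X 0 ω j} := rfl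
      rw [hpre]
      have hEalt : {ω | ∃ j, 1 - F j (X 0 ω j) ≤ t n * yp j}
          = {ω | ∃ j, 1 - t n * yp j ≤ F j (X 0 ω j)} := by
        ext ω
        constructor <;> rintro ⟨j, hj⟩ <;> exact ⟨j, by linarith⟩
      rw [hEalt]
      refine le_antisymm ?_ (measure_mono ?_)
      · have hsub : {ω | ∃ j, 1 - t n * yp j ≤ F j (X 0 ω j)}
            ⊆ {ω | ∃ j, qp n j < X 0 ω j}
              ∪ ⋃ j, ({ω | 1 - t n * yp j ≤ F j (X 0 ω j)} \ {ω | qp n j < X 0 ω j}) := by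
          rintro ω ⟨j, hj⟩
          by_cases h : qp n j < X 0 ω j
          · exact Or.inl ⟨j, h⟩
          · exact Or.inr (Set.mem_iUnion.2 ⟨j, ⟨hj, h⟩⟩)
        refine le_trans (measure_mono hsub) ?_
        refine le_trans (measure_union_le _ _) ?_
        rw [measure_iUnion_null fun j => (hsp n hn1 hkn1 hlt j).2.1, add_zero]
      · rintro ω ⟨j, hj⟩
        exact ⟨j, (hsp n hn1 hkn1 hlt j).2.2 hj⟩
    show (t n)⁻¹ * (ℙ {ω | ∃ j, 1 - F j (X 0 ω j) ≤ t n * yp j}).toReal = _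
    rw [hinvt n hn1 hkn1, hPeq]
  -- LLN for the lower union count
  have hBUm : Tendsto
      (fun n => ℙ {ω | γ ≤ |(k n : ℝ)⁻¹ * empSum X n (SUm n) ω - ℓ ym|}) atTop (nhds 0) := by
    refine lln X hXmeas hindep hident k hk1' hkinfty SUm hSUmmeas (ℓ ym) ?_ hγpos
    have hbase := (htail ym hym0).comp httend
    refine Tendsto.congr' ?_ hbase
    filter_upwards [hgood] with n hgn
    obtain ⟨hn1, hkn1, hlt, -⟩ := hgn
    have hPeq : ℙ {ω | ∃ j, 1 - F j (X 0 ω j) ≤ t n * ym j} = ℙ (X 0 ⁻¹' SUm n) := by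
      have hpre : X 0 ⁻¹' SUm n = {ω | ∃ j ∈ J, qm n j < X 0 ω j} := rfl
      rw [hpre]
      have hEalt : {ω | ∃ j, 1 - F j (X 0 ω j) ≤ t n * ym j}
          = {ω | ∃ j, 1 - t n * ym j ≤ F j (X 0 ω j)} := by
        ext ω
        constructor <;> rintro ⟨j, hj⟩ <;> exact ⟨j, by linarith⟩
      rw [hEalt]
      refine le_antisymm ?_ (measure_mono ?_)
      · have hsub : {ω | ∃ j, 1 - t n * ym j ≤ F j (X 0 ω j)}
            ⊆ {ω | ∃ j ∈ J, qm n j < X 0 ω j}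
              ∪ ⋃ j, (if j ∈ J then
                  ({ω | 1 - t n * ym j ≤ F j (X 0 ω j)} \ {ω | qm n j < X 0 ω j})
                else {ω | 1 - t n * ym j ≤ F j (X 0 ω j)}) := by
          rintro ω ⟨j, hj⟩
          by_cases hjJ : j ∈ J
          · by_cases h : qm n j < X 0 ω j
            · exact Or.inl ⟨j, hjJ, h⟩
            · refine Or.inr (Set.mem_iUnion.2 ⟨j, ?_⟩)
              rw [if_pos hjJ]
              exact ⟨hj, h⟩
          · refine Or.inr (Set.mem_iUnion.2 ⟨j, ?_⟩)
            rw [if_neg hjJ]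
            exact hj
        refine le_trans (measure_mono hsub) ?_
        refine le_trans (measure_union_le _ _) ?_
        have hnull : ∀ j : Fin d, ℙ (if j ∈ J then
            ({ω | 1 - t n * ym j ≤ F j (X 0 ω j)} \ {ω | qm n j < X 0 ω j})
          else {ω | 1 - t n * ym j ≤ F j (X 0 ω j)}) = 0 := by
          intro j
          by_cases hjJ : j ∈ J
          · rw [if_pos hjJ]
            exact (hsm n hn1 hkn1 hlt j hjJ).2.1
          · rw [if_neg hjJ]
            have hz : t n * ym j = 0 := by rw [hymnJ j hjJ, mul_zero]
            rw [hz]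
            have := margin_M1 hXmeas hF hFcont j (le_refl (0:ℝ)) one_pos
            rw [ENNReal.ofReal_zero] at this
            rw [show (1 : ℝ) - 0 = 1 - 0 from rfl]
            exact this
        rw [measure_iUnion_null hnull, add_zero]
      · rintro ω ⟨j, hjJ, hj⟩
        exact ⟨j, (hsm n hn1 hkn1 hlt j hjJ).2.2 hj⟩
    show (t n)⁻¹ * (ℙ {ω | ∃ j, 1 - F j (X 0 ω j) ≤ t n * ym j}).toReal = _
    rw [hinvt n hn1 hkn1, hPeq]
  -- final assembly
  set Bad : ℕ → Set Ωs := fun n =>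
    ((⋃ j ∈ J, {ω | δ/2 ≤ |(k n : ℝ)⁻¹ * empSum X n (S1 j n) ω - (x j - δ)|})
      ∪ (⋃ j, {ω | δ/2 ≤ |(k n : ℝ)⁻¹ * empSum X n (S2 j n) ω - yp j|})
      ∪ {ω | γ ≤ |(k n : ℝ)⁻¹ * empSum X n (SUm n) ω - ℓ ym|})
      ∪ {ω | γ ≤ |(k n : ℝ)⁻¹ * empSum X n (SUp n) ω - ℓ yp|} with hBad
  have hkey : ∀ᶠ n in atTop, {ω | ε ≤ |hatEll X (k n) n ω x - ℓ x|} ⊆ Bad n := by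
    filter_upwards [hgood] with n hgn
    obtain ⟨hn1, hkn1, hlt, hkδ1⟩ := hgn
    intro ω hω
    have hω' : ε ≤ |hatEll X (k n) n ω x - ℓ x| := hω
    by_contra hbad
    rw [hBad] at hbad
    have h1 : ω ∉ ⋃ j ∈ J, {ω | δ/2 ≤ |(k n : ℝ)⁻¹ * empSum X n (S1 j n) ω - (x j - δ)|} :=
      fun hmem => hbad (Or.inl (Or.inl (Or.inl hmem)))
    have h2 : ω ∉ ⋃ j, {ω | δ/2 ≤ |(k n : ℝ)⁻¹ * empSum X n (S2 j n) ω - yp j|} :=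
      fun hmem => hbad (Or.inl (Or.inl (Or.inr hmem)))
    have h3 : ¬ (γ ≤ |(k n : ℝ)⁻¹ * empSum X n (SUm n) ω - ℓ ym|) :=
      fun hmem => hbad (Or.inl (Or.inr hmem))
    have h4 : ¬ (γ ≤ |(k n : ℝ)⁻¹ * empSum X n (SUp n) ω - ℓ yp|) :=
      fun hmem => hbad (Or.inr hmem)
    push_neg at h3 h4
    have hb1 : ∀ j ∈ J, |(k n : ℝ)⁻¹ * empSum X n (S1 j n) ω - (x j - δ)| < δ/2 := by
      intro j hj
      by_contra hcon
      push_neg at hcon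
      exact h1 (Set.mem_biUnion hj hcon)
    have hb2 : ∀ j, |(k n : ℝ)⁻¹ * empSum X n (S2 j n) ω - yp j| < δ/2 := by
      intro j
      by_contra hcon
      push_neg at hcon
      exact h2 (Set.mem_iUnion.2 ⟨j, hcon⟩)
    have hkpos : (0:ℝ) < k n := by exact_mod_cast hkn1
    -- counting bounds
    have hcard1 : ∀ j ∈ J,
        ((((Finset.range n).filter fun i' => qm n j < X i' ω j).card : ℝ)
          < (k n : ℝ) * x j - 1/2) := by
      intro j hj
      have he := abs_lt.1 (hb1 j hj)
      have hE : empSum X n (S1 j n) ω = (k n : ℝ) * ((k n : ℝ)⁻¹ * empSum X n (S1 j n) ω) := by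
        field_simp
      have h5 : empSum X n (S1 j n) ω < (k n : ℝ) * (x j - δ/2) := by
        rw [hE]
        refine mul_lt_mul_of_pos_left ?_ hkpos
        linarith [he.2]
      have h6 : (k n : ℝ) * (x j - δ/2) ≤ (k n : ℝ) * x j - 1/2 := by nlinarith [hkδ1]
      have h7 : empSum X n (S1 j n) ω
          = ((((Finset.range n).filter fun i' => qm n j < X i' ω j).card : ℝ)) := by
        rw [hS1]
        exact empSum_card X n ω j (qm n j)
      linarith [h5, h6, h7.symm.le, h7.le]
    have hcard2 : ∀ j : Fin d,
        ((k n : ℝ) * x j - 1/2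
          ≤ (((Finset.range n).filter fun i' => qp n j < X i' ω j).card : ℝ)) := by
      intro j
      have he := abs_lt.1 (hb2 j)
      have hE : empSum X n (S2 j n) ω = (k n : ℝ) * ((k n : ℝ)⁻¹ * empSum X n (S2 j n) ω) := by
        field_simp
      have h5 : (k n : ℝ) * (x j + δ/2) ≤ empSum X n (S2 j n) ω := by
        rw [hE]
        refine mul_le_mul_of_nonneg_left ?_ hkpos.le
        have : yp j = x j + δ := by rw [hyp]
        linarith [he.1]
      have h6 : (k n : ℝ) * x j - 1/2 ≤ (k n : ℝ) * (x j + δ/2) := by nlinarith [hkδ1]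
      have h7 : empSum X n (S2 j n) ω
          = ((((Finset.range n).filter fun i' => qp n j < X i' ω j).card : ℝ)) := by
        rw [hS2]
        exact empSum_card X n ω j (qp n j)
      linarith [h5, h6, h7.le, h7.symm.le]
    -- sandwich
    have hge : (k n : ℝ)⁻¹ * empSum X n (SUm n) ω ≤ hatEll X (k n) n ω x := by
      have := hatEll_ge X (n := n) (kk := k n) ω x J (qm n) hcard1
      rw [hSUm]
      exact this
    have hle : hatEll X (k n) n ω x ≤ (k n : ℝ)⁻¹ * empSum X n (SUp n) ω := by
      have := hatEll_le X (n := n) (kk := k n) ω x (qp n) hcard2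
      rw [hSUp]
      exact this
    -- conclude
    have hlow : ℓ x - ε/2 < hatEll X (k n) n ω x := by
      have hml := abs_lt.1 h3
      have : ℓ ym - γ < (k n : ℝ)⁻¹ * empSum X n (SUm n) ω := by linarith [hml.1]
      have hgam : γ = ε/4 := hγ
      linarith [hℓ1, hge]
    have hhigh : hatEll X (k n) n ω x < ℓ x + ε/2 := by
      have hml := abs_lt.1 h4
      have hgam : γ = ε/4 := hγ
      have : (k n : ℝ)⁻¹ * empSum X n (SUp n) ω < ℓ yp + γ := by linarith [hml.2]
      linarith [hℓ2, hle]
    have habs : |hatEll X (k n) n ω x - ℓ x| < ε := by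
      rw [abs_lt]
      constructor <;> linarith
    linarith
  -- probability bound and squeeze
  have hmb : ∀ᶠ n in atTop, ℙ {ω | ε ≤ |hatEll X (k n) n ω x - ℓ x|} ≤
      (((∑ j ∈ J, ℙ {ω | δ/2 ≤ |(k n : ℝ)⁻¹ * empSum X n (S1 j n) ω - (x j - δ)|})
        + (∑ j, ℙ {ω | δ/2 ≤ |(k n : ℝ)⁻¹ * empSum X n (S2 j n) ω - yp j|}))
        + ℙ {ω | γ ≤ |(k n : ℝ)⁻¹ * empSum X n (SUm n) ω - ℓ ym|})
        + ℙ {ω | γ ≤ |(k n : ℝ)⁻¹ * empSum X n (SUp n) ω - ℓ yp|} := by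
    filter_upwards [hkey] with n hsubn
    refine le_trans (measure_mono hsubn) ?_
    rw [hBad]
    refine le_trans (measure_union_le _ _) (add_le_add ?_ le_rfl)
    refine le_trans (measure_union_le _ _) (add_le_add ?_ le_rfl)
    refine le_trans (measure_union_le _ _) (add_le_add ?_ ?_)
    · exact measure_biUnion_finset_le J _
    · refine le_trans (measure_iUnion_le _) ?_
      rw [tsum_fintype]
  have hlim : Tendsto (fun n =>
      (((∑ j ∈ J, ℙ {ω | δ/2 ≤ |(k n : ℝ)⁻¹ * empSum X n (S1 j n) ω - (x j - δ)|})
        + (∑ j, ℙ {ω | δ/2 ≤ |(k n : ℝ)⁻¹ * empSum X n (S2 j n) ω - yp j|}))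
        + ℙ {ω | γ ≤ |(k n : ℝ)⁻¹ * empSum X n (SUm n) ω - ℓ ym|})
        + ℙ {ω | γ ≤ |(k n : ℝ)⁻¹ * empSum X n (SUp n) ω - ℓ yp|}) atTop (nhds 0) := by
    have t1 : Tendsto (fun n => ∑ j ∈ J,
        ℙ {ω | δ/2 ≤ |(k n : ℝ)⁻¹ * empSum X n (S1 j n) ω - (x j - δ)|}) atTop (nhds 0) := by
      have := tendsto_finset_sum J (fun j hj => hB1 j hj)
      simpa using this
    have t2 : Tendsto (fun n => ∑ j : Fin d,
        ℙ {ω | δ/2 ≤ |(k n : ℝ)⁻¹ * empSum X n (S2 j n) ω - yp j|}) atTop (nhds 0) := by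
      have := tendsto_finset_sum Finset.univ (fun j (_ : j ∈ Finset.univ) => hB2 j)
      simpa using this
    have := ((t1.add t2).add hBUm).add hBUp
    simpa using this
  exact tendsto_of_tendsto_of_tendsto_of_le_of_le' tendsto_const_nhds hlim
    (Eventually.of_forall fun n => zero_le) hmb

include hXmeas hF hFcont in
theorem stmt_13' {ℓ : (Fin d → ℝ) → ℝ} (hd : 2 ≤ d)
    (hindep : iIndepFun X ℙ)
    (hident : ∀ i, Measure.map (X i) ℙ = Measure.map (X 0) ℙ)
    (htail : ∀ x : Fin d → ℝ, (∀ j, 0 ≤ x j) →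
      Tendsto (fun t : ℝ => t⁻¹ * (ℙ {ω | ∃ j, 1 - F j (X 0 ω j) ≤ t * x j}).toReal)
        (nhdsWithin 0 (Set.Ioi 0)) (nhds (ℓ x)))
    (k : ℕ → ℕ) (hk1 : ∀ n, 1 ≤ n → 1 ≤ k n ∧ k n ≤ n)
    (hkinfty : Tendsto (fun n => (k n : ℝ)) atTop atTop)
    (hkn : Tendsto (fun n => (k n : ℝ) / n) atTop (nhds 0)) :
    ∀ ε > (0:ℝ),
      Tendsto
        (fun n => ℙ {ω | ε <
          ⨆ x : (Set.univ.pi fun _ : Fin d => Set.Icc (0:ℝ) 1),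
            |hatEll X (k n) n ω x.1 - ℓ x.1|})
        atTop (nhds 0) := by
  classical
  intro ε hε
  have hdpos : 0 < d := by omega
  have hdR : (0:ℝ) < d := by exact_mod_cast hdpos
  -- choose grid size N
  obtain ⟨N, hNgt⟩ := exists_nat_gt ((4 * d) / ε)
  have hNR : (4 * (d:ℝ)) / ε < N := hNgt
  have hNpos : (0:ℝ) < N := lt_of_le_of_lt (by positivity) hNR
  have hdN : (d:ℝ) / N < ε / 4 := by
    rw [div_lt_iff₀ hNpos]
    rw [div_lt_iff₀ hε] at hNR
    nlinarith
  have hdNnn : 0 ≤ (d:ℝ) / N := by positivity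
  -- the grid
  set G : (Fin d → Fin (N + 2)) → (Fin d → ℝ) := fun c j => ((c j : ℕ) : ℝ) / N with hG
  have hG0 : ∀ c j, 0 ≤ G c j := by
    intro c j
    rw [hG]
    positivity
  -- pointwise convergence on grid points
  have hpt : ∀ c, Tendsto
      (fun n => ℙ {ω | ε/2 ≤ |hatEll X (k n) n ω (G c) - ℓ (G c)|}) atTop (nhds 0) := by
    intro c
    exact pointwise hXmeas hF hFcont hdpos hindep hident htail k hk1 hkinfty hkn
      (G c) (hG0 c) (by positivity)
  -- deterministic inclusion
  have hsub : ∀ n, {ω | ε <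
      ⨆ x : (Set.univ.pi fun _ : Fin d => Set.Icc (0:ℝ) 1),
        |hatEll X (k n) n ω x.1 - ℓ x.1|}
      ⊆ ⋃ c, {ω | ε/2 ≤ |hatEll X (k n) n ω (G c) - ℓ (G c)|} := by
    intro n ω hω
    have hω' : ε < ⨆ x : (Set.univ.pi fun _ : Fin d => Set.Icc (0:ℝ) 1),
        |hatEll X (k n) n ω x.1 - ℓ x.1| := hω
    by_contra hnot
    have hall : ∀ c, |hatEll X (k n) n ω (G c) - ℓ (G c)| < ε/2 := by
      intro c
      by_contra hcon
      push_neg at hcon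
      exact hnot (Set.mem_iUnion.2 ⟨c, hcon⟩)
    -- bound the supremum
    have hbound : (⨆ x : (Set.univ.pi fun _ : Fin d => Set.Icc (0:ℝ) 1),
        |hatEll X (k n) n ω x.1 - ℓ x.1|) ≤ 3 * ε / 4 := by
      refine Real.iSup_le ?_ (by positivity)
      rintro ⟨x, hx⟩
      have hxmem : ∀ j, x j ∈ Set.Icc (0:ℝ) 1 := fun j => (Set.mem_univ_pi.1 hx) j
      have hx0 : ∀ j, 0 ≤ x j := fun j => (hxmem j).1
      have hx1 : ∀ j, x j ≤ 1 := fun j => (hxmem j).2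
      -- grid neighbours
      set m : Fin d → ℕ := fun j => ⌊(N:ℝ) * x j⌋₊ with hm
      have hmle : ∀ j, (m j : ℝ) ≤ (N:ℝ) * x j := by
        intro j
        exact Nat.floor_le (mul_nonneg (Nat.cast_nonneg N) (hx0 j))
      have hmlt : ∀ j, (N:ℝ) * x j < (m j : ℝ) + 1 := fun j => Nat.lt_floor_add_one _
      have hmN : ∀ j, m j ≤ N := by
        intro j
        have h1 : (N:ℝ) * x j ≤ (N:ℝ) := by nlinarith [hx1 j, hx0 j]
        have := Nat.floor_le_floor h1
        rw [Nat.floor_natCast] at this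
        exact this
      set cm : Fin d → Fin (N + 2) := fun j => ⟨m j, by have := hmN j; omega⟩ with hcm
      set cp : Fin d → Fin (N + 2) := fun j => ⟨m j + 1, by have := hmN j; omega⟩ with hcp
      have hGm : ∀ j, G cm j = (m j : ℝ) / N := fun j => rfl
      have hGp : ∀ j, G cp j = ((m j : ℝ) + 1) / N := by
        intro j
        have h0 : G cp j = (((m j + 1 : ℕ)) : ℝ) / N := rfl
        rw [h0]
        push_cast
        ring
      have hGmle : ∀ j, G cm j ≤ x j := by
        intro j
        rw [hGm j, div_le_iff₀ hNpos]
        calc (m j : ℝ) ≤ (N:ℝ) * x j := hmle j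
          _ = x j * N := mul_comm _ _
      have hGple : ∀ j, x j ≤ G cp j := by
        intro j
        rw [hGp j, le_div_iff₀ hNpos]
        calc x j * N = (N:ℝ) * x j := mul_comm _ _
          _ ≤ (m j : ℝ) + 1 := (hmlt j).le
      have hGm0 : ∀ j, 0 ≤ G cm j := hG0 cm
      -- ℓ Lipschitz bounds
      obtain ⟨-, hlip1⟩ := ell_lip hXmeas hF hFcont htail (G cm) x hGm0 hGmle
      obtain ⟨-, hlip2⟩ := ell_lip hXmeas hF hFcont htail x (G cp) hx0 hGple
      have hdivN : ∀ j, ((m j : ℝ) + 1) / N - (m j : ℝ) / N = 1 / N := by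
        intro j
        rw [← sub_div]; congr 1; ring
      have hs1 : ∑ j, (x j - G cm j) ≤ (d:ℝ) / N := by
        have hone : ∀ j ∈ Finset.univ, x j - G cm j ≤ 1 / N := by
          intro j _
          have h1 : x j ≤ ((m j : ℝ) + 1) / N := by rw [← hGp j]; exact hGple j
          have h2 := hdivN j
          rw [hGm j]
          linarith
        calc ∑ j, (x j - G cm j) ≤ ∑ _j : Fin d, (1:ℝ)/N := Finset.sum_le_sum hone
          _ = (d:ℝ)/N := by
            rw [Finset.sum_const, Finset.card_univ, Fintype.card_fin, nsmul_eq_mul]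
            ring
      have hs2 : ∑ j, (G cp j - x j) ≤ (d:ℝ) / N := by
        have hone : ∀ j ∈ Finset.univ, G cp j - x j ≤ 1 / N := by
          intro j _
          have h1 : (m j : ℝ) / N ≤ x j := by rw [← hGm j]; exact hGmle j
          have h2 := hdivN j
          rw [hGp j]
          linarith
        calc ∑ j, (G cp j - x j) ≤ ∑ _j : Fin d, (1:ℝ)/N := Finset.sum_le_sum hone
          _ = (d:ℝ)/N := by
            rw [Finset.sum_const, Finset.card_univ, Fintype.card_fin, nsmul_eq_mul]
            ring
      have hL1 : ℓ x ≤ ℓ (G cm) + (d:ℝ)/N := by linarith [hlip1, hs1]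
      have hL2 : ℓ (G cp) ≤ ℓ x + (d:ℝ)/N := by linarith [hlip2, hs2]
      have hmon1 : hatEll X (k n) n ω (G cm) ≤ hatEll X (k n) n ω x :=
        hatEll_mono X (k n) n ω hGmle
      have hmon2 : hatEll X (k n) n ω x ≤ hatEll X (k n) n ω (G cp) :=
        hatEll_mono X (k n) n ω hGple
      have hc1 := abs_lt.1 (hall cm)
      have hc2 := abs_lt.1 (hall cp)
      rw [abs_le]
      constructor
      · linarith [hc1.1, hdN]
      · linarith [hc2.2, hdN]
    linarith [hω', hbound]
  -- probability bound and squeeze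
  have hmb : ∀ n, ℙ {ω | ε <
      ⨆ x : (Set.univ.pi fun _ : Fin d => Set.Icc (0:ℝ) 1),
        |hatEll X (k n) n ω x.1 - ℓ x.1|}
      ≤ ∑ c, ℙ {ω | ε/2 ≤ |hatEll X (k n) n ω (G c) - ℓ (G c)|} := by
    intro n
    refine le_trans (measure_mono (hsub n)) ?_
    refine le_trans (measure_iUnion_le _) ?_
    rw [tsum_fintype]
  have hlim : Tendsto (fun n => ∑ c, ℙ {ω | ε/2 ≤ |hatEll X (k n) n ω (G c) - ℓ (G c)|})
      atTop (nhds 0) := by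
    have := tendsto_finset_sum Finset.univ (fun c (_ : c ∈ Finset.univ) => hpt c)
    simpa using this
  exact tendsto_of_tendsto_of_tendsto_of_le_of_le tendsto_const_nhds hlim
    (fun n => zero_le) hmb

end Main

/-- uniform consistency of the nonparametric estimator `ℓ̂_{n,k}`:
`sup_{x ∈ [0,1]^d} |ℓ̂_{n,k}(x) − ℓ(x;θ₀)| → 0` in probability. -/
theorem stmt_13 {Ωs : Type*} [MeasureSpace Ωs] [IsProbabilityMeasure (ℙ : Measure Ωs)]
    (d : ℕ) (hd : 2 ≤ d)
    (X : ℕ → Ωs → Fin d → ℝ) (hXmeas : ∀ i, Measurable (X i))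
    (hindep : iIndepFun X ℙ)
    (hident : ∀ i, Measure.map (X i) ℙ = Measure.map (X 0) ℙ)
    (F : Fin d → ℝ → ℝ) (hF : ∀ j t, F j t = (ℙ {ω | X 0 ω j ≤ t}).toReal)
    (hFcont : ∀ j, Continuous (F j))
    (ℓ : (Fin d → ℝ) → ℝ)
    (htail : ∀ x : Fin d → ℝ, (∀ j, 0 ≤ x j) →
      Tendsto (fun t : ℝ => t⁻¹ * (ℙ {ω | ∃ j, 1 - F j (X 0 ω j) ≤ t * x j}).toReal)
        (nhdsWithin 0 (Set.Ioi 0)) (nhds (ℓ x)))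
    (k : ℕ → ℕ) (hk1 : ∀ n, 1 ≤ n → 1 ≤ k n ∧ k n ≤ n)
    (hkinfty : Tendsto (fun n => (k n : ℝ)) atTop atTop)
    (hkn : Tendsto (fun n => (k n : ℝ) / n) atTop (nhds 0)) :
    ∀ ε > (0:ℝ),
      Tendsto
        (fun n => ℙ {ω | ε <
          ⨆ x : (Set.univ.pi fun _ : Fin d => Set.Icc (0:ℝ) 1),
            |hatEll X (k n) n ω x.1 - ℓ x.1|})
        atTop (nhds 0) := by
  exact stmt_13' hXmeas hF hFcont hd hindep hident htail k hk1 hkinfty hkn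
end
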